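/- For positive reals α⁺, α⁻, and densities p⁺, g, p⁻ ≥ 0 (not all zero) at a point, the function D ↦ -(α⁺·p⁺·log D + g·log(1−D) + α⁻·p⁻·log(1−D)) on (0,1) is uniquely minimized at D* = α⁺p⁺ / (α⁺p⁺ + g + α⁻p⁻). -/

import Mathlib

open Real Set

theorem stmt_1 (ap am pp g pm : ℝ) (hap : 0 < ap) (ham : 0 < am)
    (hpp : 0 ≤ pp) (hg : 0 ≤ g) (hpm : 0 ≤ pm)
    (hnum : 0 < ap * pp) (hden : 0 < g + am * pm)
    (f : ℝ → ℝ)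
    (hf : ∀ D, f D = -(ap * pp * Real.log D + g * Real.log (1 - D) + am * pm * Real.log (1 - D))) :
    ap * pp / (ap * pp + g + am * pm) ∈ Set.Ioo (0 : ℝ) 1 ∧
      ∀ D ∈ Set.Ioo (0 : ℝ) 1, D ≠ ap * pp / (ap * pp + g + am * pm) →
        f (ap * pp / (ap * pp + g + am * pm)) < f D := by
  have hrw : ap * pp + g + am * pm = ap * pp + (g + am * pm) := by ring
  rw [hrw]
  set a := ap * pp with ha
  set b := g + am * pm with hb
  have hs : 0 < a + b := by linarith
  have hd0 : 0 < a / (a + b) := div_pos hnum hs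
  have hd1 : a / (a + b) < 1 := by
    rw [div_lt_one hs]; linarith
  have hmem : a / (a + b) ∈ Set.Ioo (0 : ℝ) 1 := ⟨hd0, hd1⟩
  have hdne : a / (a + b) ≠ 0 := ne_of_gt hd0
  have h1d : 1 - a / (a + b) = b / (a + b) := by
    field_simp
    ring
  refine ⟨by simpa [add_assoc] using hmem, ?_⟩
  intro D hD hne
  have hD0 := hD.1
  have hD1 := hD.2
  have hx : 0 < D / (a / (a + b)) := div_pos hD0 hd0
  have hy : 0 < (1 - D) / (b / (a + b)) := by
    apply div_pos (by linarith) (div_pos hden hs)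
  have hxne : D / (a / (a + b)) ≠ 1 := by
    rw [Ne, div_eq_one_iff_eq hdne]
    exact hne
  have hyne : (1 - D) / (b / (a + b)) ≠ 1 := by
    rw [Ne, div_eq_one_iff_eq (ne_of_gt (div_pos hden hs))]
    intro h
    apply hne
    rw [← h1d] at h; linarith
  have l1 := Real.log_lt_sub_one_of_pos hx hxne
  have l2 := Real.log_lt_sub_one_of_pos hy hyne
  rw [Real.log_div (ne_of_gt hD0) hdne] at l1
  rw [Real.log_div (by linarith : (1:ℝ) - D ≠ 0) (ne_of_gt (div_pos hden hs))] at l2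
  have e1 : D / (a / (a + b)) = D * (a + b) / a := by
    field_simp
  have e2 : (1 - D) / (b / (a + b)) = (1 - D) * (a + b) / b := by
    field_simp
  rw [e1] at l1
  rw [e2] at l2
  have m1 : a * Real.log D - a * Real.log (a / (a + b)) < D * (a + b) - a := by
    have := mul_lt_mul_of_pos_left l1 hnum
    have ea : a * (D * (a + b) / a - 1) = D * (a + b) - a := by
      field_simp
    nlinarith [this]
  have m2 : b * Real.log (1 - D) - b * Real.log (b / (a + b)) < (1 - D) * (a + b) - b := by
    have := mul_lt_mul_of_pos_left l2 hden
    have eb : b * ((1 - D) * (a + b) / b - 1) = (1 - D) * (a + b) - b := by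
      field_simp
    nlinarith [this]
  rw [hf, hf]
  have key : a * Real.log (a / (a + b)) + b * Real.log (b / (a + b)) >
      a * Real.log D + b * Real.log (1 - D) := by linarith
  rw [← h1d] at key
  nlinarith [key]
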